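/- Let (Ω, ℱ, P) be a probability space where Ω is a standard Borel space and ℱ its Borel σ-algebra. Let 𝒢₁, 𝒢₂, 𝒢₃ be sub-σ-algebras of ℱ that are mutually independent (as a triple), and let ℋ₁ ⊆ 𝒢₁ and ℋ₂ ⊆ 𝒢₂ be sub-σ-algebras. Then 𝒢₁ and 𝒢₂ are conditionally independent given the σ-algebra ℋ₁ ⊔ ℋ₂ ⊔ 𝒢₃ generated by ℋ₁, ℋ₂ and 𝒢₃. -/

import Mathlib

open MeasureTheory ProbabilityTheory MeasurableSpace Set
open scoped NNReal

section Aux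

variable {Ω : Type*}

/-- Extension of set-integral equality from a π-system to the generated σ-algebra. -/
lemma aux_setIntegral_eq_on_generateFrom {m0 : MeasurableSpace Ω}
    (μ : Measure Ω) [IsFiniteMeasure μ] {p : Set (Set Ω)} (hpi : IsPiSystem p)
    (hle : MeasurableSpace.generateFrom p ≤ m0) {f g : Ω → ℝ}
    (hf : Integrable f μ) (hg : Integrable g μ)
    (huniv : ∫ x, f x ∂μ = ∫ x, g x ∂μ)
    (hp : ∀ s ∈ p, ∫ x in s, f x ∂μ = ∫ x in s, g x ∂μ) :
    ∀ s, MeasurableSet[MeasurableSpace.generateFrom p] s →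
      ∫ x in s, f x ∂μ = ∫ x in s, g x ∂μ := by
  intro s hs
  refine MeasurableSpace.induction_on_inter (m := MeasurableSpace.generateFrom p)
    (C := fun t _ => ∫ x in t, f x ∂μ = ∫ x in t, g x ∂μ) (s := p) rfl hpi
    (by simp) hp ?_ ?_ s hs
  · intro t ht hC
    have htm : MeasurableSet[m0] t := hle _ ht
    have h1 := integral_add_compl htm hf
    have h2 := integral_add_compl htm hg
    linarith
  · intro F hdisj hFm hC
    have hFm' : ∀ i, MeasurableSet[m0] (F i) := fun i => hle _ (hFm i)
    rw [MeasureTheory.integral_iUnion hFm' hdisj hf.integrableOn,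
      MeasureTheory.integral_iUnion hFm' hdisj hg.integrableOn]
    exact tsum_congr hC

/-- Product formula for integrals of functions measurable w.r.t. independent σ-algebras. -/
lemma aux_integral_mul {m₁ m₂ : MeasurableSpace Ω} {m0 : MeasurableSpace Ω}
    {μ : Measure Ω} [IsProbabilityMeasure μ]
    (h₁ : m₁ ≤ m0) (h₂ : m₂ ≤ m0)
    (hindep : Indep m₁ m₂ μ) {X Y : Ω → ℝ}
    (hX : StronglyMeasurable[m₁] X) (hY : StronglyMeasurable[m₂] Y) :
    ∫ x, X x * Y x ∂μ = (∫ x, X x ∂μ) * ∫ x, Y x ∂μ := by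
  have hXY : IndepFun X Y μ := by
    rw [IndepFun_iff_Indep]
    exact indep_of_indep_of_le_right (indep_of_indep_of_le_left hindep hX.measurable.comap_le)
      hY.measurable.comap_le
  exact IndepFun.integral_mul_eq_mul_integral hXY ((hX.mono h₁).aestronglyMeasurable) ((hY.mono h₂).aestronglyMeasurable)

/-- Main auxiliary version of the theorem, with the ambient σ-algebra declared last so that
instance resolution picks it. -/
lemma aux_condIndep_of_iIndep_triple_of_le
    (G₁ G₂ G₃ H₁ H₂ : MeasurableSpace Ω) {mΩ : MeasurableSpace Ω} [StandardBorelSpace Ω]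
    (P : Measure Ω) [IsProbabilityMeasure P]
    (hG₁ : G₁ ≤ mΩ) (hG₂ : G₂ ≤ mΩ) (hG₃ : G₃ ≤ mΩ)
    (hH₁ : H₁ ≤ G₁) (hH₂ : H₂ ≤ G₂)
    (hindep : iIndep (fun i : Fin 3 => ![G₁, G₂, G₃] i) P) :
    CondIndep (H₁ ⊔ H₂ ⊔ G₃) G₁ G₂
      (sup_le (sup_le (hH₁.trans hG₁) (hH₂.trans hG₂)) hG₃) P := by
  have hH₁Ω : H₁ ≤ mΩ := hH₁.trans hG₁
  have hH₂Ω : H₂ ≤ mΩ := hH₂.trans hG₂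
  have hm' : H₁ ⊔ H₂ ⊔ G₃ ≤ mΩ := sup_le (sup_le hH₁Ω hH₂Ω) hG₃
  have hH₁m' : H₁ ≤ H₁ ⊔ H₂ ⊔ G₃ := le_sup_left.trans le_sup_left
  have hH₂m' : H₂ ≤ H₁ ⊔ H₂ ⊔ G₃ := le_sup_right.trans le_sup_left
  have hG₃m' : G₃ ≤ H₁ ⊔ H₂ ⊔ G₃ := le_sup_right
  have hG₂s : G₂ ≤ G₂ ⊔ G₃ := le_sup_left
  have hG₃s : G₃ ≤ G₂ ⊔ G₃ := le_sup_right
  have hG₁s' : G₁ ≤ G₁ ⊔ G₃ := le_sup_left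
  have hG₃s' : G₃ ≤ G₁ ⊔ G₃ := le_sup_right
  -- triple product rule
  have htriple : ∀ t₁ t₂ t₃ : Set Ω, MeasurableSet[G₁] t₁ → MeasurableSet[G₂] t₂ →
      MeasurableSet[G₃] t₃ → P (t₁ ∩ t₂ ∩ t₃) = P t₁ * P t₂ * P t₃ := by
    intro t₁ t₂ t₃ h1 h2 h3
    have hmeas : ∀ i, MeasurableSet[![G₁, G₂, G₃] i] (![t₁, t₂, t₃] i) := by
      intro i; fin_cases i <;> assumption
    have h := hindep.meas_iInter hmeas
    have hset : (⋂ i, ![t₁, t₂, t₃] i) = t₁ ∩ t₂ ∩ t₃ := by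
      ext x
      simp [Fin.forall_fin_succ, and_assoc]
    rw [hset, Fin.prod_univ_three] at h
    simpa using h
  -- pairwise independence facts
  have h_le : ∀ i, (fun i : Fin 3 => ![G₁, G₂, G₃] i) i ≤ mΩ := by
    intro i; fin_cases i <;> assumption
  have h1_23 : Indep G₁ (G₂ ⊔ G₃) P := by
    have := indep_iSup_of_disjoint h_le hindep
      (S := {0}) (T := {1, 2}) (by simp [Set.disjoint_left])
    simpa [iSup_or, iSup_sup_eq, iSup_iSup_eq_left] using this
  have h2_13 : Indep G₂ (G₁ ⊔ G₃) P := by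
    have := indep_iSup_of_disjoint h_le hindep
      (S := {1}) (T := {0, 2}) (by simp [Set.disjoint_left])
    simpa [iSup_or, iSup_sup_eq, iSup_iSup_eq_left] using this
  have h23 : Indep G₂ G₃ P := by
    have := indep_iSup_of_disjoint h_le hindep
      (S := {1}) (T := {2}) (by simp [Set.disjoint_left])
    simpa using this
  -- the generating π-system
  set p : Set (Set Ω) := {s | ∃ s₁ s₂ s₃ : Set Ω, MeasurableSet[H₁] s₁ ∧ MeasurableSet[H₂] s₂ ∧
    MeasurableSet[G₃] s₃ ∧ s = s₁ ∩ s₂ ∩ s₃} with hp_def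
  have hpi : IsPiSystem p := by
    rintro s ⟨s₁, s₂, s₃, hs₁, hs₂, hs₃, rfl⟩ t ⟨t₁, t₂, t₃, ht₁, ht₂, ht₃, rfl⟩ -
    exact ⟨s₁ ∩ t₁, s₂ ∩ t₂, s₃ ∩ t₃, hs₁.inter ht₁, hs₂.inter ht₂, hs₃.inter ht₃,
      by ext x; simp only [Set.mem_inter_iff]; tauto⟩
  have hgen : H₁ ⊔ H₂ ⊔ G₃ = MeasurableSpace.generateFrom p := by
    apply le_antisymm
    · refine sup_le (sup_le ?_ ?_) ?_ <;> intro s hs <;> apply measurableSet_generateFrom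
      · exact ⟨s, Set.univ, Set.univ, hs, MeasurableSet.univ, MeasurableSet.univ, by simp⟩
      · exact ⟨Set.univ, s, Set.univ, MeasurableSet.univ, hs, MeasurableSet.univ, by simp⟩
      · exact ⟨Set.univ, Set.univ, s, MeasurableSet.univ, MeasurableSet.univ, hs, by simp⟩
    · refine generateFrom_le ?_
      rintro s ⟨s₁, s₂, s₃, hs₁, hs₂, hs₃, rfl⟩
      exact ((hH₁m' _ hs₁).inter (hH₂m' _ hs₂)).inter (hG₃m' _ hs₃)
  rw [condIndep_iff _ _ _ _ hG₁ hG₂ P]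
  intro A B hA hB
  have hAm : MeasurableSet[mΩ] A := hG₁ _ hA
  have hBm : MeasurableSet[mΩ] B := hG₂ _ hB
  set g₁ : Ω → ℝ := P⟦A | H₁⟧ with hg₁_def
  set g₂ : Ω → ℝ := P⟦B | H₂⟧ with hg₂_def
  have hfA : Integrable (A.indicator fun _ => (1 : ℝ)) P := (integrable_const 1).indicator hAm
  have hfB : Integrable (B.indicator fun _ => (1 : ℝ)) P := (integrable_const 1).indicator hBm
  have hfAB : Integrable ((A ∩ B).indicator fun _ => (1 : ℝ)) P :=
    (integrable_const 1).indicator (hAm.inter hBm)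
  have hg₁sm : StronglyMeasurable[H₁] g₁ := stronglyMeasurable_condExp
  have hg₂sm : StronglyMeasurable[H₂] g₂ := stronglyMeasurable_condExp
  have hg₁int : Integrable g₁ P := integrable_condExp
  have hg₂int : Integrable g₂ P := integrable_condExp
  -- basic set integrals of the conditional expectations
  have hint₁ : ∀ s₁ : Set Ω, MeasurableSet[H₁] s₁ →
      ∫ x, s₁.indicator g₁ x ∂P = (P (A ∩ s₁)).toReal := by
    intro s₁ hs₁
    rw [integral_indicator (hH₁Ω _ hs₁), hg₁_def, setIntegral_condExp hH₁Ω hfA hs₁,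
      setIntegral_indicator hAm, setIntegral_const, Set.inter_comm]
    simp [measureReal_def]
  have hint₂ : ∀ s₂ : Set Ω, MeasurableSet[H₂] s₂ →
      ∫ x, s₂.indicator g₂ x ∂P = (P (B ∩ s₂)).toReal := by
    intro s₂ hs₂
    rw [integral_indicator (hH₂Ω _ hs₂), hg₂_def, setIntegral_condExp hH₂Ω hfB hs₂,
      setIntegral_indicator hBm, setIntegral_const, Set.inter_comm]
    simp [measureReal_def]
  -- the three set-integral identities on the π-system
  have E1 : ∀ s ∈ p, ∫ x in s, g₁ x ∂P = ∫ x in s, A.indicator (fun _ => (1 : ℝ)) x ∂P := by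
    rintro s ⟨s₁, s₂, s₃, hs₁, hs₂, hs₃, rfl⟩
    have hs₂₃ : MeasurableSet[G₂ ⊔ G₃] (s₂ ∩ s₃) :=
      (hG₂s _ (hH₂ _ hs₂)).inter (hG₃s _ hs₃)
    have hfe : (fun x => s₁.indicator g₁ x * (s₂ ∩ s₃).indicator (fun _ => (1 : ℝ)) x)
        = (s₁ ∩ s₂ ∩ s₃).indicator g₁ := by
      funext x
      by_cases h1 : x ∈ s₁ <;> by_cases h2 : x ∈ s₂ <;> by_cases h3 : x ∈ s₃ <;>
        simp [Set.indicator_apply, h1, h2, h3, Set.mem_inter_iff]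
    rw [← integral_indicator (((hH₁Ω _ hs₁).inter (hH₂Ω _ hs₂)).inter (hG₃ _ hs₃)), ← hfe,
      aux_integral_mul hG₁ (sup_le hG₂ hG₃) h1_23
        ((hg₁sm.mono hH₁).indicator (hH₁ _ hs₁)) (stronglyMeasurable_const.indicator hs₂₃),
      hint₁ s₁ hs₁, integral_indicator_const _ ((hH₂Ω _ hs₂).inter (hG₃ _ hs₃)),
      setIntegral_indicator hAm, setIntegral_const]
    have hPint : P (s₂ ∩ s₃) = P s₂ * P s₃ := by
      have := htriple Set.univ s₂ s₃ MeasurableSet.univ (hH₂ _ hs₂) hs₃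
      simpa using this
    have hset : s₁ ∩ s₂ ∩ s₃ ∩ A = A ∩ s₁ ∩ s₂ ∩ s₃ := by
      ext x; simp only [Set.mem_inter_iff]; tauto
    rw [hset]; simp only [measureReal_def]; rw [htriple (A ∩ s₁) s₂ s₃ (hA.inter (hH₁ _ hs₁)) (hH₂ _ hs₂) hs₃, hPint]
    simp [ENNReal.toReal_mul]
    ring
  have E2 : ∀ s ∈ p, ∫ x in s, g₂ x ∂P = ∫ x in s, B.indicator (fun _ => (1 : ℝ)) x ∂P := by
    rintro s ⟨s₁, s₂, s₃, hs₁, hs₂, hs₃, rfl⟩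
    have hs₁₃ : MeasurableSet[G₁ ⊔ G₃] (s₁ ∩ s₃) :=
      (hG₁s' _ (hH₁ _ hs₁)).inter (hG₃s' _ hs₃)
    have hfe : (fun x => s₂.indicator g₂ x * (s₁ ∩ s₃).indicator (fun _ => (1 : ℝ)) x)
        = (s₁ ∩ s₂ ∩ s₃).indicator g₂ := by
      funext x
      by_cases h1 : x ∈ s₁ <;> by_cases h2 : x ∈ s₂ <;> by_cases h3 : x ∈ s₃ <;>
        simp [Set.indicator_apply, h1, h2, h3, Set.mem_inter_iff]
    rw [← integral_indicator (((hH₁Ω _ hs₁).inter (hH₂Ω _ hs₂)).inter (hG₃ _ hs₃)), ← hfe,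
      aux_integral_mul hG₂ (sup_le hG₁ hG₃) h2_13
        ((hg₂sm.mono hH₂).indicator (hH₂ _ hs₂)) (stronglyMeasurable_const.indicator hs₁₃),
      hint₂ s₂ hs₂, integral_indicator_const _ ((hH₁Ω _ hs₁).inter (hG₃ _ hs₃)),
      setIntegral_indicator hBm, setIntegral_const]
    have hPint : P (s₁ ∩ s₃) = P s₁ * P s₃ := by
      have := htriple s₁ Set.univ s₃ (hH₁ _ hs₁) MeasurableSet.univ hs₃
      simpa using this
    have hset : s₁ ∩ s₂ ∩ s₃ ∩ B = s₁ ∩ (B ∩ s₂) ∩ s₃ := by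
      ext x; simp only [Set.mem_inter_iff]; tauto
    rw [hset]; simp only [measureReal_def]; rw [htriple s₁ (B ∩ s₂) s₃ (hH₁ _ hs₁) (hB.inter (hH₂ _ hs₂)) hs₃, hPint]
    simp [ENNReal.toReal_mul]
    ring
  have E3 : ∀ s ∈ p, ∫ x in s, (g₁ x * g₂ x) ∂P
      = ∫ x in s, (A ∩ B).indicator (fun _ => (1 : ℝ)) x ∂P := by
    rintro s ⟨s₁, s₂, s₃, hs₁, hs₂, hs₃, rfl⟩
    have hVsm : StronglyMeasurable[G₂ ⊔ G₃]
        (fun x => s₂.indicator g₂ x * s₃.indicator (fun _ => (1 : ℝ)) x) :=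
      ((hg₂sm.mono (hH₂.trans hG₂s)).indicator (hG₂s _ (hH₂ _ hs₂))).mul
        (stronglyMeasurable_const.indicator (hG₃s _ hs₃))
    have hfe : (fun x => s₁.indicator g₁ x *
        (s₂.indicator g₂ x * s₃.indicator (fun _ => (1 : ℝ)) x))
        = (s₁ ∩ s₂ ∩ s₃).indicator (fun x => g₁ x * g₂ x) := by
      funext x
      by_cases h1 : x ∈ s₁ <;> by_cases h2 : x ∈ s₂ <;> by_cases h3 : x ∈ s₃ <;>
        simp [Set.indicator_apply, h1, h2, h3, Set.mem_inter_iff]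
    rw [← integral_indicator (((hH₁Ω _ hs₁).inter (hH₂Ω _ hs₂)).inter (hG₃ _ hs₃)), ← hfe,
      aux_integral_mul hG₁ (sup_le hG₂ hG₃) h1_23
        ((hg₁sm.mono hH₁).indicator (hH₁ _ hs₁)) hVsm,
      aux_integral_mul hG₂ hG₃ h23 ((hg₂sm.mono hH₂).indicator (hH₂ _ hs₂))
        (stronglyMeasurable_const.indicator hs₃),
      hint₁ s₁ hs₁, hint₂ s₂ hs₂, integral_indicator_const _ (hG₃ _ hs₃),
      setIntegral_indicator (hAm.inter hBm), setIntegral_const]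
    have hset : s₁ ∩ s₂ ∩ s₃ ∩ (A ∩ B) = A ∩ s₁ ∩ (B ∩ s₂) ∩ s₃ := by
      ext x; simp only [Set.mem_inter_iff]; tauto
    rw [hset]; simp only [measureReal_def]; rw [htriple (A ∩ s₁) (B ∩ s₂) s₃ (hA.inter (hH₁ _ hs₁)) (hB.inter (hH₂ _ hs₂)) hs₃]
    simp [ENNReal.toReal_mul]
    ring
  -- identify the conditional expectations
  have huniv_mem : Set.univ ∈ p :=
    ⟨Set.univ, Set.univ, Set.univ, MeasurableSet.univ, MeasurableSet.univ, MeasurableSet.univ,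
      by simp⟩
  have hkey : ∀ (h f : Ω → ℝ), Integrable h P → Integrable f P →
      AEStronglyMeasurable[H₁ ⊔ H₂ ⊔ G₃] h P →
      (∀ s ∈ p, ∫ x in s, h x ∂P = ∫ x in s, f x ∂P) →
      h =ᵐ[P] P[f | H₁ ⊔ H₂ ⊔ G₃] := by
    intro h f hh hf hmeas hp'
    have huniv : ∫ x, h x ∂P = ∫ x, f x ∂P := by
      have := hp' Set.univ huniv_mem
      simpa using this
    have hext := aux_setIntegral_eq_on_generateFrom P hpi (hgen ▸ hm') hh hf huniv hp'
    refine ae_eq_condExp_of_forall_setIntegral_eq hm' hf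
      (fun s _ _ => hh.integrableOn) (fun s hs _ => ?_) hmeas
    exact hext s (hgen ▸ hs)
  have k1 : g₁ =ᵐ[P] P⟦A | H₁ ⊔ H₂ ⊔ G₃⟧ :=
    hkey g₁ _ hg₁int hfA ((hg₁sm.mono hH₁m').aestronglyMeasurable) E1
  have k2 : g₂ =ᵐ[P] P⟦B | H₁ ⊔ H₂ ⊔ G₃⟧ :=
    hkey g₂ _ hg₂int hfB ((hg₂sm.mono hH₂m').aestronglyMeasurable) E2
  have hg₁bdd : ∀ᵐ x ∂P, ‖g₁ x‖ ≤ (1 : ℝ) := by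
    have h0 : ∀ᵐ x ∂P, |(A.indicator fun _ => (1 : ℝ)) x| ≤ ((1 : ℝ≥0) : ℝ) := by
      refine Filter.Eventually.of_forall fun x => ?_
      by_cases h : x ∈ A <;> simp [Set.indicator_apply, h]
    have hb := ae_bdd_condExp_of_ae_bdd (m := H₁) (μ := P) h0
    filter_upwards [hb] with x hx
    simpa [Real.norm_eq_abs] using hx
  have hg₁₂int : Integrable (fun x => g₁ x * g₂ x) P :=
    Integrable.bdd_mul hg₂int ((hg₁sm.mono hH₁Ω).aestronglyMeasurable) hg₁bdd
  have k3 : (fun x => g₁ x * g₂ x) =ᵐ[P] P⟦A ∩ B | H₁ ⊔ H₂ ⊔ G₃⟧ :=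
    hkey _ _ hg₁₂int hfAB
      (((hg₁sm.mono hH₁m').mul (hg₂sm.mono hH₂m')).aestronglyMeasurable) E3
  exact k3.symm.trans (k1.mul k2)

end Aux

/-- If `𝒢₁, 𝒢₂, 𝒢₃` are mutually independent sub-σ-algebras and `ℋ₁ ⊆ 𝒢₁`, `ℋ₂ ⊆ 𝒢₂`,
then `𝒢₁` and `𝒢₂` are conditionally independent given `ℋ₁ ⊔ ℋ₂ ⊔ 𝒢₃`. -/
theorem condIndep_of_iIndep_triple_of_le
    {Ω : Type*} {mΩ : MeasurableSpace Ω} [StandardBorelSpace Ω]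
    (P : Measure Ω) [IsProbabilityMeasure P]
    (G₁ G₂ G₃ H₁ H₂ : MeasurableSpace Ω)
    (hG₁ : G₁ ≤ mΩ) (hG₂ : G₂ ≤ mΩ) (hG₃ : G₃ ≤ mΩ)
    (hH₁ : H₁ ≤ G₁) (hH₂ : H₂ ≤ G₂)
    (hindep : iIndep (fun i : Fin 3 => ![G₁, G₂, G₃] i) P) :
    CondIndep (H₁ ⊔ H₂ ⊔ G₃) G₁ G₂
      (sup_le (sup_le (hH₁.trans hG₁) (hH₂.trans hG₂)) hG₃) P :=
  aux_condIndep_of_iIndep_triple_of_le G₁ G₂ G₃ H₁ H₂ P hG₁ hG₂ hG₃ hH₁ hH₂ hindep
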